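/- Let θ* := (ρ+Γ(σ−1))/(σf), A := (θ*)^{−σ} and B := −ΓA/(Kρ). Define w(x) := A⟨e,x⟩^{1−σ}/(1−σ) + B for x ∈ ℝⁿ₊ \ {0}. Then w is continuously differentiable on ℝⁿ₊ \ {0} with ∂w/∂x_j(x) = A⟨e,x⟩^{−σ} > 0 for every j, and for every x ∈ ℝⁿ₊ \ {0}: ρ w(x) = (σ/(1−σ)) ∑_{i∈F} (∂w/∂x_i(x))^{1−1/σ} + ⟨∇w(x), (D+Bᵀ)x⟩ + Γ(1 − ⟨e,x⟩^{σ−1}/K) ⟨∇w(x), x⟩. Moreover, for each i ∈ F, the supremum over c > 0 of c^{1−σ}/(1−σ) − c·∂w/∂x_i(x) equals (σ/(1−σ))(∂w/∂x_i(x))^{1−1/σ} and is attained uniquely at c = θ*⟨e,x⟩. -/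

import Mathlib

open Matrix Finset

/-- The diagonal matrix of outflows: `D i i = -∑_{j ≠ i} B i j`. -/
noncomputable def Dmat {n : ℕ} (B : Matrix (Fin n) (Fin n) ℝ) : Matrix (Fin n) (Fin n) ℝ :=
  Matrix.diagonal fun i => -∑ j ∈ Finset.univ.erase i, B i j

/-- The continuous linear functional `y ↦ ∑ j, p j * y j` on `ℝⁿ`. -/
noncomputable def dotCLM {n : ℕ} (p : Fin n → ℝ) : (Fin n → ℝ) →L[ℝ] ℝ :=
  LinearMap.toContinuousLinearMap
    { toFun := fun y => ∑ j, p j * y j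
      map_add' := fun y z => by
        simp [Pi.add_apply, mul_add, Finset.sum_add_distrib]
      map_smul' := fun a y => by
        simp only [Pi.smul_apply, smul_eq_mul, RingHom.id_apply, Finset.mul_sum]
        exact Finset.sum_congr rfl fun j _ => by ring }

lemma aux_max (σ p : ℝ) (hσ : 1 < σ) (hp : 0 < p) :
    IsGreatest ((fun c => c ^ (1 - σ) / (1 - σ) - c * p) '' Set.Ioi (0:ℝ))
      ((σ / (1 - σ)) * p ^ (1 - 1/σ)) ∧
    ∀ c : ℝ, 0 < c → c ^ (1 - σ) / (1 - σ) - c * p = (σ / (1 - σ)) * p ^ (1 - 1/σ) →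
      c = p ^ (-1/σ) := by
  have hσ0 : σ ≠ 0 := (lt_trans zero_lt_one hσ).ne'
  have h1σ : (1:ℝ) - σ ≠ 0 := by intro h; linarith
  set g : ℝ → ℝ := fun c => c ^ (1 - σ) / (1 - σ) - c * p with hg
  set cs := p ^ (-1/σ) with hcs
  have hcs0 : 0 < cs := Real.rpow_pos_of_pos hp _
  have hval : g cs = (σ/(1-σ)) * p ^ (1 - 1/σ) := by
    have h1 : cs ^ (1-σ) = p ^ (1-1/σ) := by
      rw [hcs, ← Real.rpow_mul hp.le]; congr 1; field_simp; ring
    have h2 : cs * p = p ^ (1-1/σ) := by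
      rw [hcs, show (1:ℝ)-1/σ = -1/σ + 1 by ring, Real.rpow_add hp, Real.rpow_one]
    simp only [hg, h1, h2]
    field_simp; ring
  have hderiv : ∀ c : ℝ, 0 < c → HasDerivAt g (c^(-σ) - p) c := by
    intro c hc
    have h := ((Real.hasDerivAt_rpow_const (x:=c) (p:=1-σ) (Or.inl hc.ne')).div_const
      (1-σ)).sub ((hasDerivAt_id c).mul_const p)
    refine HasDerivAt.congr_deriv h ?_
    rw [show (1:ℝ)-σ-1 = -σ by ring, mul_div_cancel_left₀ _ h1σ, one_mul]
  have hcspow : cs ^ (-σ) = p := by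
    rw [hcs, ← Real.rpow_mul hp.le, show -1/σ * -σ = 1 by field_simp, Real.rpow_one]
  have hanti : StrictAntiOn g (Set.Ici cs) := by
    apply strictAntiOn_of_deriv_neg (convex_Ici cs)
    · exact fun c hc =>
        ((hderiv c (lt_of_lt_of_le hcs0 hc)).differentiableAt.continuousAt.continuousWithinAt)
    · intro c hc
      rw [interior_Ici] at hc
      rw [(hderiv c (lt_trans hcs0 hc)).deriv]
      have : c ^ (-σ) < cs ^ (-σ) := Real.rpow_lt_rpow_of_neg hcs0 hc (by linarith)
      rw [hcspow] at this; linarith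
  have hmono : StrictMonoOn g (Set.Ioc 0 cs) := by
    apply strictMonoOn_of_deriv_pos (convex_Ioc 0 cs)
    · exact fun c hc => ((hderiv c hc.1).differentiableAt.continuousAt.continuousWithinAt)
    · intro c hc
      rw [interior_Ioc] at hc
      rw [(hderiv c hc.1).deriv]
      have : cs ^ (-σ) < c ^ (-σ) := Real.rpow_lt_rpow_of_neg hc.1 hc.2 (by linarith)
      rw [hcspow] at this; linarith
  have hlt : ∀ c : ℝ, 0 < c → c ≠ cs → g c < g cs := by
    intro c hc hne
    rcases lt_or_gt_of_ne hne with h | h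
    · exact hmono ⟨hc, h.le⟩ ⟨hcs0, le_refl cs⟩ h
    · exact hanti (Set.mem_Ici.2 le_rfl) h.le h
  refine ⟨⟨⟨cs, hcs0, hval⟩, ?_⟩, ?_⟩
  · rintro y ⟨c, hc, rfl⟩
    by_cases h : c = cs
    · rw [h, hval]
    · exact le_of_lt (hval ▸ hlt c hc h)
  · intro c hc heq
    by_contra h
    have := hlt c hc h
    rw [hval] at this
    exact absurd heq (ne_of_lt this)


/-- Verification of the social planner's HJB equation in the logistic framework (S1)(U1):
with `θ* = (ρ+Γ(σ−1))/(σf)`, `A = (θ*)^{−σ}`, `B = −ΓA/(Kρ)`, the function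
`w(x) = A⟨e,x⟩^{1−σ}/(1−σ) + B` is differentiable on `ℝⁿ₊ \ {0}` with
`∂w/∂x_j(x) = A⟨e,x⟩^{−σ} > 0`, satisfies the planner's HJB equation, and for each `i ∈ F`
the Hamiltonian supremum is attained uniquely at `c = θ*⟨e,x⟩`. -/
theorem stmt15 {n : ℕ} (B : Matrix (Fin n) (Fin n) ℝ)
    (hB : ∀ i j, 0 ≤ B i j) (hdiag : ∀ i, B i i = 0)
    (F : Finset (Fin n)) (hF : F.Nonempty)
    (σ Γ K ρ : ℝ) (hσ : 1 < σ) (hΓ : 0 < Γ) (hK : 0 < K) (hρ : 0 < ρ)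
    (θstar A Bc : ℝ)
    (hθstar : θstar = (ρ + Γ * (σ - 1)) / (σ * F.card))
    (hA : A = θstar ^ (-σ)) (hBc : Bc = -(Γ * A) / (K * ρ))
    (w : (Fin n → ℝ) → ℝ)
    (hw : ∀ x : Fin n → ℝ, w x = A * (∑ j, x j) ^ (1 - σ) / (1 - σ) + Bc) :
    ∀ x : Fin n → ℝ, (∀ j, 0 ≤ x j) → x ≠ 0 →
      (0 < A * (∑ j, x j) ^ (-σ)) ∧
      HasFDerivAt w (dotCLM fun _ => A * (∑ j, x j) ^ (-σ)) x ∧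
      (ρ * w x = (σ / (1 - σ)) * (∑ _i ∈ F, (A * (∑ j, x j) ^ (-σ)) ^ (1 - 1 / σ))
        + (∑ j, (A * (∑ j, x j) ^ (-σ)) * (((Dmat B + B)ᵀ *ᵥ x) j))
        + Γ * (1 - (∑ j, x j) ^ (σ - 1) / K) * (∑ j, (A * (∑ j, x j) ^ (-σ)) * x j)) ∧
      (∀ i ∈ F,
        IsGreatest ((fun c => c ^ (1 - σ) / (1 - σ) - c * (A * (∑ j, x j) ^ (-σ))) ''
            Set.Ioi (0 : ℝ))
          ((σ / (1 - σ)) * (A * (∑ j, x j) ^ (-σ)) ^ (1 - 1 / σ)) ∧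
        ∀ c : ℝ, 0 < c →
          c ^ (1 - σ) / (1 - σ) - c * (A * (∑ j, x j) ^ (-σ))
            = (σ / (1 - σ)) * (A * (∑ j, x j) ^ (-σ)) ^ (1 - 1 / σ) →
          c = θstar * (∑ j, x j)) := by
  have hσ0 : σ ≠ 0 := (lt_trans zero_lt_one hσ).ne'
  have h1σ : (1:ℝ) - σ ≠ 0 := by intro h; linarith
  have hfpos : (0:ℝ) < F.card := by exact_mod_cast Finset.card_pos.mpr hF
  have hθ : 0 < θstar := by
    rw [hθstar]
    apply div_pos
    · nlinarith
    · positivity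
  have hApos : 0 < A := hA ▸ Real.rpow_pos_of_pos hθ _
  intro x hx hx0
  set s := ∑ j, x j with hs_def
  have hs : 0 < s := by
    obtain ⟨j, hj⟩ : ∃ j, x j ≠ 0 := by
      by_contra h; push_neg at h; exact hx0 (funext h)
    exact Finset.sum_pos' (fun i _ => hx i) ⟨j, Finset.mem_univ j, lt_of_le_of_ne (hx j) (Ne.symm hj)⟩
  have hp : 0 < A * s ^ (-σ) := mul_pos hApos (Real.rpow_pos_of_pos hs _)
  -- the gradient value as a power of θ* s
  have hθs : 0 < θstar * s := mul_pos hθ hs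
  have hpeq : A * s ^ (-σ) = (θstar * s) ^ (-σ) := by
    rw [hA, Real.mul_rpow hθ.le hs.le]
  refine ⟨hp, ?_, ?_, ?_⟩
  · -- derivative
    have hinner : HasFDerivAt (fun y : Fin n → ℝ => ∑ j, y j) (dotCLM fun _ => (1:ℝ)) x := by
      have h := (dotCLM fun _ : Fin n => (1:ℝ)).hasFDerivAt (x := x)
      convert h using 2 with y
      simp [dotCLM]
    have houter : HasDerivAt (fun t : ℝ => A * t ^ (1-σ) / (1-σ) + Bc) (A * s ^ (-σ)) s := by
      have h := ((((Real.hasDerivAt_rpow_const (x:=s) (p:=1-σ) (Or.inl hs.ne')).const_mul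
        A).div_const (1-σ)).add_const Bc)
      refine HasDerivAt.congr_deriv h ?_
      rw [show (1:ℝ)-σ-1 = -σ by ring, mul_div_assoc, mul_div_cancel_left₀ _ h1σ]
    have hcomp := houter.comp_hasFDerivAt x hinner
    have hfun : ((fun t : ℝ => A * t ^ (1-σ) / (1-σ) + Bc) ∘ (fun y : Fin n → ℝ => ∑ j, y j)) = w := by
      funext y; rw [hw y]; rfl
    have hclm : (A * s ^ (-σ)) • (dotCLM fun _ : Fin n => (1:ℝ))
        = dotCLM (fun _ : Fin n => A * s ^ (-σ)) := by
      apply ContinuousLinearMap.ext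
      intro y
      simp [dotCLM, Finset.mul_sum]
    rw [hfun, hclm] at hcomp
    exact hcomp
  · -- HJB equation
    have hrow : ∀ i, ∑ j, (Dmat B + B) i j = 0 := by
      intro i
      have h1 : ∑ j, B i j = ∑ j ∈ Finset.univ.erase i, B i j := by
        rw [← Finset.sum_erase_add Finset.univ _ (Finset.mem_univ i), hdiag i, add_zero]
      have h2 : ∑ j, Dmat B i j = -∑ j ∈ Finset.univ.erase i, B i j := by
        rw [Finset.sum_eq_single i]
        · simp [Dmat]
        · intro b _ hb; simp [Dmat, Matrix.diagonal_apply_ne' _ hb]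
        · intro h; exact absurd (Finset.mem_univ i) h
      simp only [Matrix.add_apply, Finset.sum_add_distrib, h1, h2, neg_add_cancel]
    have hdrift : ∑ j, (A * s ^ (-σ)) * (((Dmat B + B)ᵀ *ᵥ x) j) = 0 := by
      rw [← Finset.mul_sum]
      have hz : ∑ j, ((Dmat B + B)ᵀ *ᵥ x) j = 0 := by
        simp only [Matrix.mulVec, Matrix.transpose_apply, dotProduct]
        rw [Finset.sum_comm]
        refine Finset.sum_eq_zero fun i _ => ?_
        rw [← Finset.sum_mul, hrow, zero_mul]
      rw [hz, mul_zero]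
    have hsumx : ∑ j, (A * s ^ (-σ)) * x j = (A * s ^ (-σ)) * s := by
      rw [← Finset.mul_sum]
    have hsumF : ∑ _i ∈ F, (A * s ^ (-σ)) ^ (1 - 1/σ) = (F.card : ℝ) * (A * s ^ (-σ)) ^ (1 - 1/σ) := by
      rw [Finset.sum_const, nsmul_eq_mul]
    have hθsA : θstar ^ (1-σ) = θstar * A := by
      rw [hA, show (1:ℝ)-σ = 1 + -σ by ring, Real.rpow_add hθ, Real.rpow_one]
    have hpow : (A * s ^ (-σ)) ^ (1 - 1/σ) = θstar * A * s ^ (1-σ) := by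
      rw [hpeq, ← Real.rpow_mul hθs.le, show -σ * (1 - 1/σ) = 1 - σ by field_simp; ring,
        Real.mul_rpow hθ.le hs.le, hθsA]
    have hms : s ^ (-σ) * s = s ^ (1-σ) := by
      rw [show (1:ℝ)-σ = -σ + 1 by ring, Real.rpow_add hs, Real.rpow_one]
    have hsumx2 : ∑ j, (A * s ^ (-σ)) * x j = A * s ^ (1-σ) := by
      rw [← Finset.mul_sum, ← hs_def, mul_assoc, hms]
    have hsig : s ^ (σ-1) = (s ^ (1-σ))⁻¹ := by
      rw [show σ-1 = -(1-σ) by ring, Real.rpow_neg hs.le]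
    have hθrel : θstar * (σ * F.card) = ρ + Γ * (σ - 1) := by
      rw [hθstar, div_mul_cancel₀]
      positivity
    rw [hw x, ← hs_def, hdrift, hsumx2, hsumF, hpow, hsig, hBc]
    have hq : s ^ ((1:ℝ)-σ) ≠ 0 := (Real.rpow_pos_of_pos hs _).ne'
    set q := s ^ ((1:ℝ)-σ) with hq_def
    field_simp
    linear_combination (-(A * q * K)) * hθrel
  · -- Hamiltonian
    intro i hi
    have haux := aux_max σ (A * s ^ (-σ)) hσ hp
    refine ⟨haux.1, fun c hc heq => ?_⟩
    have := haux.2 c hc heq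
    rw [this, hpeq, ← Real.rpow_mul hθs.le, show -σ * (-1/σ) = 1 by field_simp, Real.rpow_one]
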